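/- (Gray's conditional rate-distortion lemma.) Let V take values in a finite set 𝒱, W in a finite set 𝒲, with a given joint law, let 𝒱̂ be a finite reproduction set and d : 𝒱 × 𝒱̂ → [0,∞) a distortion measure, and let D ≥ 0 be such that some joint law of (V, W, V̂) extending the law of (V, W) satisfies E[d(V, V̂)] ≤ D. Then R_{V|W}(D) ≤ R_V(D) ≤ R_{V|W}(D) + I(V; W). -/

import Mathlib

open MeasureTheory ProbabilityTheory Filter

/-- `plog p = −p·log₂ p` (with the convention `plog 0 = 0`). -/
noncomputable def plog (p : ℝ) : ℝ := -(p * Real.logb 2 p)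

/-- Shannon entropy (base 2) of a random variable `X` under the measure `μ`:
`H(X) = −Σ_s P(X = s) log₂ P(X = s)`. -/
noncomputable def shEnt {Ω : Type*} [MeasurableSpace Ω] (μ : Measure Ω)
    {S : Type*} (X : Ω → S) : ℝ :=
  ∑' s : S, plog (μ (X ⁻¹' {s})).toReal

/-- Conditional Shannon entropy (base 2): `H(X | Y) = H(X, Y) − H(Y)`. -/
noncomputable def shCondEnt {Ω : Type*} [MeasurableSpace Ω] (μ : Measure Ω)
    {S T : Type*} (X : Ω → S) (Y : Ω → T) : ℝ :=
  shEnt μ (fun ω => (X ω, Y ω)) - shEnt μ Y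

/-- The binary entropy function `H_b(p) = −p log₂ p − (1−p) log₂ (1−p)`. -/
noncomputable def binEnt (p : ℝ) : ℝ := plog p + plog (1 - p)
/-- Mutual information (base 2): `I(X;Y) = H(X) + H(Y) − H(X,Y)`. -/
noncomputable def mutInf {Ω : Type*} [MeasurableSpace Ω] (μ : Measure Ω)
    {S T : Type*} (X : Ω → S) (Y : Ω → T) : ℝ :=
  shEnt μ X + shEnt μ Y - shEnt μ (fun ω => (X ω, Y ω))

/-- Conditional mutual information (base 2):
`I(X;Y|Z) = H(X|Z) + H(Y|Z) − H(X,Y|Z)`. -/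
noncomputable def condMutInf {Ω : Type*} [MeasurableSpace Ω] (μ : Measure Ω)
    {S T U : Type*} (X : Ω → S) (Y : Ω → T) (Z : Ω → U) : ℝ :=
  shCondEnt μ X Z + shCondEnt μ Y Z - shCondEnt μ (fun ω => (X ω, Y ω)) Z

/-! ### Auxiliary lemmas -/

@[simp] lemma plog_zero : plog 0 = 0 := by simp [plog]
@[simp] lemma plog_one : plog 1 = 0 := by simp [plog]

section Pure
variable {S T U : Type*} [Fintype S] [Fintype T] [Fintype U]

lemma reindex1 (F : S × T × U → ℝ) : ∑ q, F q = ∑ su : S × U, ∑ t, F (su.1, t, su.2) := by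
  calc ∑ q, F q = ∑ x : (S × U) × T, F (x.1.1, x.2, x.1.2) :=
        Fintype.sum_equiv ⟨fun q => ((q.1, q.2.2), q.2.1), fun x => (x.1.1, x.2, x.1.2),
          fun _ => rfl, fun _ => rfl⟩ _ _ (fun q => rfl)
    _ = _ := Fintype.sum_prod_type _

lemma reindex2 (F : S × T × U → ℝ) : ∑ q, F q = ∑ tu : T × U, ∑ s, F (s, tu.1, tu.2) := by
  calc ∑ q, F q = ∑ x : (T × U) × S, F (x.2, x.1.1, x.1.2) :=
        Fintype.sum_equiv ⟨fun q => ((q.2.1, q.2.2), q.1), fun x => (x.2, x.1.1, x.1.2),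
          fun _ => rfl, fun _ => rfl⟩ _ _ (fun q => rfl)
    _ = _ := Fintype.sum_prod_type _

lemma reindex3 (F : S × T × U → ℝ) : ∑ q, F q = ∑ u, ∑ st : S × T, F (st.1, st.2, u) := by
  calc ∑ q, F q = ∑ x : U × (S × T), F (x.2.1, x.2.2, x.1) :=
        Fintype.sum_equiv ⟨fun q => (q.2.2, q.1, q.2.1), fun x => (x.2.1, x.2.2, x.1),
          fun _ => rfl, fun _ => rfl⟩ _ _ (fun q => rfl)
    _ = _ := Fintype.sum_prod_type _

lemma fub1 (p : S × T × U → ℝ) (c : S → U → ℝ) :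
    ∑ su : S × U, (∑ t, p (su.1, t, su.2)) * c su.1 su.2
      = ∑ q : S × T × U, p q * c q.1 q.2.2 := by
  rw [reindex1 (fun q => p q * c q.1 q.2.2)]
  simp_rw [Finset.sum_mul]

lemma fub2 (p : S × T × U → ℝ) (c : T → U → ℝ) :
    ∑ tu : T × U, (∑ s, p (s, tu.1, tu.2)) * c tu.1 tu.2
      = ∑ q : S × T × U, p q * c q.2.1 q.2.2 := by
  rw [reindex2 (fun q => p q * c q.2.1 q.2.2)]
  simp_rw [Finset.sum_mul]

lemma fub3 (p : S × T × U → ℝ) (c : U → ℝ) :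
    ∑ u : U, (∑ st : S × T, p (st.1, st.2, u)) * c u
      = ∑ q : S × T × U, p q * c q.2.2 := by
  rw [reindex3 (fun q => p q * c q.2.2)]
  simp_rw [Finset.sum_mul]

/-- entropy-combination form of conditional mutual information of a pmf `p` on `S×T×U`. -/
noncomputable def entForm (p : S × T × U → ℝ) : ℝ :=
  (∑ su : S × U, plog (∑ t, p (su.1, t, su.2)))
  + (∑ tu : T × U, plog (∑ s, p (s, tu.1, tu.2)))
  - (∑ u : U, plog (∑ st : S × T, p (st.1, st.2, u)))
  - ∑ q : S × T × U, plog (p q)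

noncomputable def logForm (p : S × T × U → ℝ) : ℝ :=
  ∑ q : S × T × U, p q *
    (Real.logb 2 (p q) + Real.logb 2 (∑ st : S × T, p (st.1, st.2, q.2.2))
      - Real.logb 2 (∑ t, p (q.1, t, q.2.2)) - Real.logb 2 (∑ s, p (s, q.2.1, q.2.2)))

lemma pure_eq (p : S × T × U → ℝ) : entForm p = logForm p := by
  unfold entForm logForm
  simp only [plog, mul_add, mul_sub, Finset.sum_add_distrib, Finset.sum_sub_distrib,
    Finset.sum_neg_distrib]
  rw [← fub1 p (fun s u => Real.logb 2 (∑ t, p (s, t, u))),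
      ← fub2 p (fun t u => Real.logb 2 (∑ s, p (s, t, u))),
      ← fub3 p (fun u => Real.logb 2 (∑ st : S × T, p (st.1, st.2, u)))]
  ring

lemma pure_zero (p : S × T × U → ℝ) (hp : ∀ q, 0 ≤ p q)
    (hind : ∀ q : S × T × U,
      p q * (∑ st : S × T, p (st.1, st.2, q.2.2))
        = (∑ t, p (q.1, t, q.2.2)) * (∑ s, p (s, q.2.1, q.2.2))) :
    logForm p = 0 := by
  unfold logForm
  refine Finset.sum_eq_zero fun q _ => ?_
  obtain ⟨s0, t0, u0⟩ := q
  rcases eq_or_lt_of_le (hp (s0, t0, u0)) with h0 | hpos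
  · rw [← h0]; ring
  · have hXZ : 0 < ∑ t, p (s0, t, u0) := by
      refine lt_of_lt_of_le hpos ?_
      exact Finset.single_le_sum (f := fun t => p (s0, t, u0)) (fun t _ => hp _)
        (Finset.mem_univ t0)
    have hYZ : 0 < ∑ s, p (s, t0, u0) := by
      refine lt_of_lt_of_le hpos ?_
      exact Finset.single_le_sum (f := fun s => p (s, t0, u0)) (fun s _ => hp _)
        (Finset.mem_univ s0)
    have hZ : 0 < ∑ st : S × T, p (st.1, st.2, u0) := by
      refine lt_of_lt_of_le hpos ?_
      exact Finset.single_le_sum (f := fun st : S × T => p (st.1, st.2, u0)) (fun st _ => hp _)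
        (Finset.mem_univ (s0, t0))
    have h1 : Real.logb 2 (p (s0, t0, u0)) + Real.logb 2 (∑ st : S × T, p (st.1, st.2, u0))
        = Real.logb 2 (∑ t, p (s0, t, u0)) + Real.logb 2 (∑ s, p (s, t0, u0)) := by
      rw [← Real.logb_mul (ne_of_gt hpos) (ne_of_gt hZ),
        ← Real.logb_mul (ne_of_gt hXZ) (ne_of_gt hYZ), hind (s0, t0, u0)]
    have hfin : p (s0, t0, u0) * (Real.logb 2 (p (s0, t0, u0))
          + Real.logb 2 (∑ st : S × T, p (st.1, st.2, u0))
          - Real.logb 2 (∑ t, p (s0, t, u0)) - Real.logb 2 (∑ s, p (s, t0, u0))) = 0 := by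
      rw [h1]; ring
    exact hfin

lemma pure_nonneg (p : S × T × U → ℝ) (hp : ∀ q, 0 ≤ p q) : 0 ≤ logForm p := by
  have hlog2 : (0:ℝ) < Real.log 2 := Real.log_pos (by norm_num)
  unfold logForm
  rw [← neg_nonpos, ← Finset.sum_neg_distrib]
  have key : ∀ (s0 : S) (t0 : T) (u0 : U),
      -(p (s0, t0, u0) * (Real.logb 2 (p (s0, t0, u0))
          + Real.logb 2 (∑ st : S × T, p (st.1, st.2, u0))
          - Real.logb 2 (∑ t, p (s0, t, u0)) - Real.logb 2 (∑ s, p (s, t0, u0))))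
      ≤ (1 / Real.log 2) *
        ((∑ t, p (s0, t, u0)) * (∑ s, p (s, t0, u0))
            / (∑ st : S × T, p (st.1, st.2, u0)) - p (s0, t0, u0)) := by
    intro s0 t0 u0
    set a := ∑ t, p (s0, t, u0) with ha
    set b := ∑ s, p (s, t0, u0) with hb
    set c := ∑ st : S × T, p (st.1, st.2, u0) with hc
    have ha0 : 0 ≤ a := Finset.sum_nonneg fun t _ => hp _
    have hb0 : 0 ≤ b := Finset.sum_nonneg fun s _ => hp _
    have hc0 : 0 ≤ c := Finset.sum_nonneg fun st _ => hp _
    rcases eq_or_lt_of_le (hp (s0, t0, u0)) with h0 | hpos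
    · rw [← h0]
      simp only [zero_mul, mul_zero, neg_zero, sub_zero]
      positivity
    · have haq : p (s0, t0, u0) ≤ a := by
        rw [ha]; exact Finset.single_le_sum (f := fun t => p (s0, t, u0))
          (fun t _ => hp _) (Finset.mem_univ t0)
      have hbq : p (s0, t0, u0) ≤ b := by
        rw [hb]; exact Finset.single_le_sum (f := fun s => p (s, t0, u0))
          (fun s _ => hp _) (Finset.mem_univ s0)
      have hcq : p (s0, t0, u0) ≤ c := by
        rw [hc]; exact Finset.single_le_sum (f := fun st : S × T => p (st.1, st.2, u0))
          (fun st _ => hp _) (Finset.mem_univ (s0, t0))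
      have hA : 0 < a := lt_of_lt_of_le hpos haq
      have hB : 0 < b := lt_of_lt_of_le hpos hbq
      have hC : 0 < c := lt_of_lt_of_le hpos hcq
      have hcomb : -(Real.logb 2 (p (s0,t0,u0)) + Real.logb 2 c - Real.logb 2 a - Real.logb 2 b)
          = Real.logb 2 (a * b / (c * p (s0,t0,u0))) := by
        rw [Real.logb_div (by positivity) (by positivity),
          Real.logb_mul (ne_of_gt hA) (ne_of_gt hB),
          Real.logb_mul (ne_of_gt hC) (ne_of_gt hpos)]
        ring
      have hlogle : Real.logb 2 (a * b / (c * p (s0,t0,u0)))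
          ≤ (a * b / (c * p (s0,t0,u0)) - 1) / Real.log 2 := by
        rw [Real.logb, Real.log_div_log]
        exact div_le_div_of_nonneg_right (Real.log_le_sub_one_of_pos (by positivity)) hlog2.le
      calc -(p (s0,t0,u0) * (Real.logb 2 (p (s0,t0,u0)) + Real.logb 2 c
              - Real.logb 2 a - Real.logb 2 b))
          = p (s0,t0,u0) * -(Real.logb 2 (p (s0,t0,u0)) + Real.logb 2 c
              - Real.logb 2 a - Real.logb 2 b) := by ring
        _ = p (s0,t0,u0) * Real.logb 2 (a * b / (c * p (s0,t0,u0))) := by rw [hcomb]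
        _ ≤ p (s0,t0,u0) * ((a * b / (c * p (s0,t0,u0)) - 1) / Real.log 2) :=
            mul_le_mul_of_nonneg_left hlogle (le_of_lt hpos)
        _ = (1 / Real.log 2) * (a * b / c - p (s0,t0,u0)) := by
            field_simp
  have hsum : ∑ q : S × T × U,
      (∑ t, p (q.1, t, q.2.2)) * (∑ s, p (s, q.2.1, q.2.2))
        / (∑ st : S × T, p (st.1, st.2, q.2.2)) ≤ ∑ q, p q := by
    rw [reindex3 (fun q => (∑ t, p (q.1, t, q.2.2)) * (∑ s, p (s, q.2.1, q.2.2))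
        / (∑ st : S × T, p (st.1, st.2, q.2.2))), reindex3 p]
    refine Finset.sum_le_sum fun u _ => ?_
    have inner : ∑ st : S × T, (∑ t, p (st.1, t, u)) * (∑ s, p (s, st.2, u))
          / (∑ st' : S × T, p (st'.1, st'.2, u))
        = (∑ st : S × T, p (st.1, st.2, u)) *
          ((∑ st : S × T, p (st.1, st.2, u)) / (∑ st' : S × T, p (st'.1, st'.2, u))) := by
      rw [Fintype.sum_prod_type]
      simp_rw [mul_div_assoc, ← Finset.mul_sum, ← Finset.sum_mul, ← Finset.sum_div]
      simp only [Fintype.sum_prod_type]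
      congr 1
      congr 1
      exact Finset.sum_comm
    rw [inner]
    set m := ∑ st : S × T, p (st.1, st.2, u) with hm
    have hm0 : 0 ≤ m := Finset.sum_nonneg fun st _ => hp _
    rcases eq_or_lt_of_le hm0 with h | h
    · rw [← h]; simp
    · rw [div_self (ne_of_gt h), mul_one]
  calc ∑ q : S × T × U, -(p q * (Real.logb 2 (p q)
          + Real.logb 2 (∑ st : S × T, p (st.1, st.2, q.2.2))
          - Real.logb 2 (∑ t, p (q.1, t, q.2.2)) - Real.logb 2 (∑ s, p (s, q.2.1, q.2.2))))
      ≤ ∑ q : S × T × U, (1 / Real.log 2) *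
          ((∑ t, p (q.1, t, q.2.2)) * (∑ s, p (s, q.2.1, q.2.2))
            / (∑ st : S × T, p (st.1, st.2, q.2.2)) - p q) := by
        refine Finset.sum_le_sum fun q _ => ?_
        obtain ⟨s0, t0, u0⟩ := q
        exact key s0 t0 u0
    _ = (1 / Real.log 2) * ((∑ q : S × T × U,
          (∑ t, p (q.1, t, q.2.2)) * (∑ s, p (s, q.2.1, q.2.2))
            / (∑ st : S × T, p (st.1, st.2, q.2.2))) - ∑ q, p q) := by
        rw [← Finset.mul_sum, Finset.sum_sub_distrib]
    _ ≤ 0 := mul_nonpos_of_nonneg_of_nonpos (by positivity) (sub_nonpos.2 hsum)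

end Pure

lemma shEnt_fintype {Ω : Type*} [MeasurableSpace Ω] (μ : Measure Ω)
    {S : Type*} [Fintype S] (X : Ω → S) :
    shEnt μ X = ∑ s : S, plog (μ (X ⁻¹' {s})).toReal := tsum_fintype _

lemma shEnt_comp_inj {Ω : Type*} [MeasurableSpace Ω] (μ : Measure Ω)
    {S S' : Type*} [Fintype S] [Fintype S'] (f : S → S') (hf : Function.Injective f)
    (X : Ω → S) :
    shEnt μ (fun ω => f (X ω)) = shEnt μ X := by
  classical
  rw [shEnt_fintype, shEnt_fintype]
  rw [← Finset.sum_subset (Finset.subset_univ (Finset.univ.image f))]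
  · rw [Finset.sum_image (fun a _ b _ h => hf h)]
    refine Finset.sum_congr rfl fun s _ => ?_
    have : (fun ω => f (X ω)) ⁻¹' {f s} = X ⁻¹' {s} := by
      ext ω; simp [hf.eq_iff]
    rw [this]
  · intro s' _ hs'
    have : (fun ω => f (X ω)) ⁻¹' {s'} = ∅ := by
      ext ω; simp only [Set.mem_preimage, Set.mem_singleton_iff, Set.mem_empty_iff_false, iff_false]
      intro h; exact hs' (Finset.mem_image.2 ⟨X ω, Finset.mem_univ _, h⟩)
    simp [this]

section Meas
variable {Ω : Type*} [MeasurableSpace Ω] [DiscreteMeasurableSpace Ω]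
  (μ : Measure Ω) [IsFiniteMeasure μ]
  {S T U : Type*} [Fintype S] [Fintype T] [Fintype U]

lemma meas_union_fibers (A : T → Set Ω) (hdisj : Pairwise (Function.onFun Disjoint A)) :
    (μ (⋃ t, A t)).toReal = ∑ t, (μ (A t)).toReal := by
  rw [measure_iUnion hdisj (fun t => MeasurableSet.of_discrete), tsum_fintype,
    ENNReal.toReal_sum (fun t _ => measure_ne_top μ _)]

lemma condMutInf_eq_entForm (X : Ω → S) (Y : Ω → T) (Z : Ω → U) :
    condMutInf μ X Y Z
      = entForm (fun q => (μ ((fun ω => (X ω, Y ω, Z ω)) ⁻¹' {q})).toReal) := by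
  set W : Ω → S × T × U := fun ω => (X ω, Y ω, Z ω) with hW
  have H1 : shEnt μ (fun ω => ((X ω, Y ω), Z ω)) = ∑ q : S × T × U, plog (μ (W ⁻¹' {q})).toReal := by
    have h : shEnt μ (fun ω => ((X ω, Y ω), Z ω)) = shEnt μ W :=
      shEnt_comp_inj μ (fun q : S × T × U => ((q.1, q.2.1), q.2.2))
        (fun a b hab => by
          obtain ⟨a1,a2,a3⟩ := a; obtain ⟨b1,b2,b3⟩ := b
          simpa [Prod.ext_iff, and_assoc] using hab) W
    rw [h, shEnt_fintype]
  have H2 : shEnt μ (fun ω => (X ω, Z ω))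
      = ∑ su : S × U, plog (∑ t, (μ (W ⁻¹' {(su.1, t, su.2)})).toReal) := by
    rw [shEnt_fintype]
    refine Finset.sum_congr rfl fun su _ => ?_
    congr 1
    have hset : (fun ω => (X ω, Z ω)) ⁻¹' {su} = ⋃ t, W ⁻¹' {(su.1, t, su.2)} := by
      ext ω
      simp only [Set.mem_preimage, Set.mem_singleton_iff, Set.mem_iUnion, hW, Prod.ext_iff]
      constructor
      · rintro ⟨h1, h2⟩; exact ⟨Y ω, by simp [← h1, ← h2]⟩
      · rintro ⟨t, h1, h2, h3⟩; exact ⟨h1, h3⟩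
    rw [hset, meas_union_fibers]
    intro t1 t2 hne
    refine Set.disjoint_left.2 fun ω h1 h2 => hne ?_
    simp only [Set.mem_preimage, Set.mem_singleton_iff, hW, Prod.ext_iff] at h1 h2
    exact h1.2.1.symm.trans h2.2.1
  have H3 : shEnt μ (fun ω => (Y ω, Z ω))
      = ∑ tu : T × U, plog (∑ s, (μ (W ⁻¹' {(s, tu.1, tu.2)})).toReal) := by
    rw [shEnt_fintype]
    refine Finset.sum_congr rfl fun tu _ => ?_
    congr 1
    have hset : (fun ω => (Y ω, Z ω)) ⁻¹' {tu} = ⋃ s, W ⁻¹' {(s, tu.1, tu.2)} := by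
      ext ω
      simp only [Set.mem_preimage, Set.mem_singleton_iff, Set.mem_iUnion, hW, Prod.ext_iff]
      constructor
      · rintro ⟨h1, h2⟩; exact ⟨X ω, rfl, h1, h2⟩
      · rintro ⟨s, h1, h2, h3⟩; exact ⟨h2, h3⟩
    rw [hset, meas_union_fibers]
    intro s1 s2 hne
    refine Set.disjoint_left.2 fun ω h1 h2 => hne ?_
    simp only [Set.mem_preimage, Set.mem_singleton_iff, hW, Prod.ext_iff] at h1 h2
    exact h1.1.symm.trans h2.1
  have H4 : shEnt μ Z
      = ∑ u : U, plog (∑ st : S × T, (μ (W ⁻¹' {(st.1, st.2, u)})).toReal) := by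
    rw [shEnt_fintype]
    refine Finset.sum_congr rfl fun u _ => ?_
    congr 1
    have hset : Z ⁻¹' {u} = ⋃ st : S × T, W ⁻¹' {(st.1, st.2, u)} := by
      ext ω
      simp only [Set.mem_preimage, Set.mem_singleton_iff, Set.mem_iUnion, hW, Prod.ext_iff]
      constructor
      · rintro h1; exact ⟨(X ω, Y ω), rfl, rfl, h1⟩
      · rintro ⟨st, h1, h2, h3⟩; exact h3
    rw [hset, meas_union_fibers]
    intro a b hne
    refine Set.disjoint_left.2 fun ω h1 h2 => hne ?_
    simp only [Set.mem_preimage, Set.mem_singleton_iff, hW, Prod.ext_iff] at h1 h2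
    exact Prod.ext (h1.1.symm.trans h2.1) (h1.2.1.symm.trans h2.2.1)
  unfold condMutInf shCondEnt entForm
  rw [H1, H2, H3, H4]
  ring

lemma condMutInf_nonneg (X : Ω → S) (Y : Ω → T) (Z : Ω → U) :
    0 ≤ condMutInf μ X Y Z := by
  rw [condMutInf_eq_entForm, pure_eq]
  exact pure_nonneg _ (fun q => ENNReal.toReal_nonneg)

lemma condMutInf_eq_zero (X : Ω → S) (Y : Ω → T) (Z : Ω → U)
    (hind : ∀ q : S × T × U,
      (μ ((fun ω => (X ω, Y ω, Z ω)) ⁻¹' {q})).toReal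
          * (∑ st : S × T, (μ ((fun ω => (X ω, Y ω, Z ω)) ⁻¹' {(st.1, st.2, q.2.2)})).toReal)
        = (∑ t, (μ ((fun ω => (X ω, Y ω, Z ω)) ⁻¹' {(q.1, t, q.2.2)})).toReal)
          * (∑ s, (μ ((fun ω => (X ω, Y ω, Z ω)) ⁻¹' {(s, q.2.1, q.2.2)})).toReal)) :
    condMutInf μ X Y Z = 0 := by
  rw [condMutInf_eq_entForm, pure_eq]
  exact pure_zero _ (fun q => ENNReal.toReal_nonneg) hind

end Meas

section Alg
variable {Ω : Type*} [MeasurableSpace Ω] (μ : Measure Ω)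
  {S T U : Type*} [Fintype S] [Fintype T] [Fintype U]

lemma shEnt_unit [IsProbabilityMeasure μ] : shEnt μ (fun _ : Ω => (() : Unit)) = 0 := by
  rw [shEnt_fintype]
  have : ((fun _ : Ω => (() : Unit)) ⁻¹' {()}) = Set.univ := by ext ω; simp
  simp [this]

lemma mutInf_eq_condMutInf_unit [IsProbabilityMeasure μ] (X : Ω → S) (Y : Ω → T) :
    mutInf μ X Y = condMutInf μ X Y (fun _ => ()) := by
  have hdef : condMutInf μ X Y (fun _ : Ω => ())
      = (shEnt μ (fun ω => (X ω, ())) - shEnt μ (fun _ : Ω => ()))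
        + (shEnt μ (fun ω => (Y ω, ())) - shEnt μ (fun _ : Ω => ()))
        - (shEnt μ (fun ω => ((X ω, Y ω), ())) - shEnt μ (fun _ : Ω => ())) := rfl
  have e1 : shEnt μ (fun ω => (X ω, ())) = shEnt μ X :=
    shEnt_comp_inj μ (fun s : S => (s, ())) (fun a b h => (Prod.ext_iff.1 h).1) X
  have e2 : shEnt μ (fun ω => (Y ω, ())) = shEnt μ Y :=
    shEnt_comp_inj μ (fun t : T => (t, ())) (fun a b h => (Prod.ext_iff.1 h).1) Y
  have e3 : shEnt μ (fun ω => ((X ω, Y ω), ())) = shEnt μ (fun ω => (X ω, Y ω)) :=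
    shEnt_comp_inj μ (fun st : S × T => (st, ())) (fun a b h => (Prod.ext_iff.1 h).1) _
  rw [hdef, e1, e2, e3, shEnt_unit]
  unfold mutInf
  ring

lemma mutInf_nonneg [DiscreteMeasurableSpace Ω] [IsProbabilityMeasure μ]
    (X : Ω → S) (Y : Ω → T) : 0 ≤ mutInf μ X Y := by
  rw [mutInf_eq_condMutInf_unit]
  exact condMutInf_nonneg μ X Y _

lemma mutInf_comm (X : Ω → S) (Y : Ω → T) : mutInf μ X Y = mutInf μ Y X := by
  have h : shEnt μ (fun ω => (Y ω, X ω)) = shEnt μ (fun ω => (X ω, Y ω)) :=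
    shEnt_comp_inj μ Prod.swap Prod.swap_injective (fun ω => (X ω, Y ω))
  unfold mutInf
  rw [h]; ring

lemma mutInf_chain (X : Ω → S) (Y : Ω → T) (Z : Ω → U) :
    mutInf μ X (fun ω => (Y ω, Z ω)) = mutInf μ X Z + condMutInf μ X Y Z := by
  have hassoc : shEnt μ (fun ω => (X ω, (Y ω, Z ω))) = shEnt μ (fun ω => ((X ω, Y ω), Z ω)) :=
    shEnt_comp_inj μ (fun q : (S × T) × U => (q.1.1, (q.1.2, q.2)))
      (fun a b h => by
        obtain ⟨⟨a1, a2⟩, a3⟩ := a; obtain ⟨⟨b1, b2⟩, b3⟩ := b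
        simpa [Prod.ext_iff, and_assoc] using h)
      (fun ω => ((X ω, Y ω), Z ω))
  unfold mutInf condMutInf shCondEnt
  rw [hassoc]; ring

lemma mutInf_pair_comm (X : Ω → S) (Y : Ω → T) (Z : Ω → U) :
    mutInf μ X (fun ω => (Y ω, Z ω)) = mutInf μ X (fun ω => (Z ω, Y ω)) := by
  have h1 : shEnt μ (fun ω => (Y ω, Z ω)) = shEnt μ (fun ω => (Z ω, Y ω)) :=
    shEnt_comp_inj μ Prod.swap Prod.swap_injective (fun ω => (Z ω, Y ω))
  have h2 : shEnt μ (fun ω => (X ω, (Y ω, Z ω))) = shEnt μ (fun ω => (X ω, (Z ω, Y ω))) :=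
    shEnt_comp_inj μ (fun q : S × U × T => (q.1, (q.2.2, q.2.1)))
      (fun a b h => by
        obtain ⟨a1, a2, a3⟩ := a; obtain ⟨b1, b2, b3⟩ := b
        simpa [Prod.ext_iff, and_assoc, and_comm] using h)
      (fun ω => (X ω, (Z ω, Y ω)))
  unfold mutInf
  rw [h1, h2]

lemma condMutInf_comm (X : Ω → S) (Y : Ω → T) (Z : Ω → U) :
    condMutInf μ X Y Z = condMutInf μ Y X Z := by
  have h : shEnt μ (fun ω => ((X ω, Y ω), Z ω)) = shEnt μ (fun ω => ((Y ω, X ω), Z ω)) :=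
    shEnt_comp_inj μ (fun q : (T × S) × U => ((q.1.2, q.1.1), q.2))
      (fun a b h => by
        obtain ⟨⟨a1, a2⟩, a3⟩ := a; obtain ⟨⟨b1, b2⟩, b3⟩ := b
        simp only [Prod.ext_iff] at h ⊢
        exact ⟨⟨h.1.2, h.1.1⟩, h.2⟩)
      (fun ω => ((Y ω, X ω), Z ω))
  unfold condMutInf shCondEnt
  rw [h]; ring

end Alg

section Map
variable {Ω Ω' : Type*} [MeasurableSpace Ω] [MeasurableSpace Ω'] [DiscreteMeasurableSpace Ω']
  (μ : Measure Ω) (f : Ω → Ω')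

lemma shEnt_map (hf : Measurable f) {S : Type*} (X : Ω' → S) :
    shEnt (μ.map f) X = shEnt μ (fun ω => X (f ω)) := by
  unfold shEnt
  refine tsum_congr fun s => ?_
  rw [Measure.map_apply hf MeasurableSet.of_discrete]
  rfl

lemma mutInf_map (hf : Measurable f) {S T : Type*} (X : Ω' → S) (Y : Ω' → T) :
    mutInf (μ.map f) X Y = mutInf μ (fun ω => X (f ω)) (fun ω => Y (f ω)) := by
  unfold mutInf
  rw [shEnt_map μ f hf X, shEnt_map μ f hf Y, shEnt_map μ f hf (fun ω' => (X ω', Y ω'))]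

end Map

section Dirac
variable {α : Type*} [Fintype α] [MeasurableSpace α] [MeasurableSingletonClass α]

lemma sum_dirac_apply_singleton (c : α → ENNReal) (a0 : α) :
    (∑ q : α, c q • Measure.dirac q) {a0} = c a0 := by
  classical
  rw [Measure.finset_sum_apply]
  have : ∀ q : α, (c q • Measure.dirac q) {a0} = if q = a0 then c q else 0 := by
    intro q
    rw [Measure.smul_apply, Measure.dirac_apply' _ (measurableSet_singleton a0)]
    by_cases h : q = a0 <;> simp [h, Set.indicator]
  simp_rw [this]
  simp

omit [MeasurableSingletonClass α] in
lemma sum_dirac_apply_univ (c : α → ENNReal) :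
    (∑ q : α, c q • Measure.dirac q) Set.univ = ∑ q : α, c q := by
  rw [Measure.finset_sum_apply]
  refine Finset.sum_congr rfl fun q _ => ?_
  rw [Measure.smul_apply, Measure.dirac_apply' _ MeasurableSet.univ]
  simp

end Dirac

section Main
variable {𝒱 𝒲 Vhat : Type*}
    [Fintype 𝒱] [Fintype 𝒲] [Fintype Vhat]
    [MeasurableSpace 𝒱] [DiscreteMeasurableSpace 𝒱]
    [MeasurableSpace 𝒲] [DiscreteMeasurableSpace 𝒲]
    [MeasurableSpace Vhat] [DiscreteMeasurableSpace Vhat]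

lemma lemmaA (P : Measure (𝒱 × 𝒲)) [IsProbabilityMeasure P]
    (d : 𝒱 → Vhat → ℝ)
    (ν : Measure (𝒱 × 𝒲 × Vhat)) [IsProbabilityMeasure ν]
    (hm : ν.map (fun q => (q.1, q.2.1)) = P) :
    ∃ ν' : Measure (𝒱 × Vhat), IsProbabilityMeasure ν' ∧
      ν'.map Prod.fst = P.map Prod.fst ∧
      (∑ q' : 𝒱 × Vhat, (ν' {q'}).toReal * d q'.1 q'.2)
        = (∑ q : 𝒱 × 𝒲 × Vhat, (ν {q}).toReal * d q.1 q.2.2) ∧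
      mutInf ν' Prod.fst Prod.snd
        ≤ condMutInf ν (fun q => q.1) (fun q => q.2.2) (fun q => q.2.1)
          + mutInf P Prod.fst Prod.snd := by
  classical
  set g : 𝒱 × 𝒲 × Vhat → 𝒱 × Vhat := fun q => (q.1, q.2.2) with hgdef
  refine ⟨ν.map g, Measure.isProbabilityMeasure_map Measurable.of_discrete.aemeasurable, ?_, ?_, ?_⟩
  · rw [← hm, Measure.map_map measurable_fst Measurable.of_discrete,
      Measure.map_map measurable_fst Measurable.of_discrete]
    rfl
  · have hsing : ∀ q' : 𝒱 × Vhat,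
        ((ν.map g) {q'}).toReal = ∑ w, (ν {(q'.1, w, q'.2)}).toReal := by
      rintro ⟨v, vh⟩
      rw [Measure.map_apply Measurable.of_discrete (measurableSet_singleton _)]
      have hset : g ⁻¹' {(v, vh)} = ⋃ w, ({(v, w, vh)} : Set (𝒱 × 𝒲 × Vhat)) := by
        ext q
        simp only [hgdef, Set.mem_preimage, Set.mem_singleton_iff, Set.mem_iUnion, Prod.ext_iff]
        constructor
        · rintro ⟨h1, h2⟩; exact ⟨q.2.1, h1, rfl, h2⟩
        · rintro ⟨w, h1, h2, h3⟩; exact ⟨h1, h3⟩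
      rw [hset, meas_union_fibers]
      intro w1 w2 hne
      refine Set.disjoint_left.2 fun q h1 h2 => hne ?_
      simp only [Set.mem_singleton_iff] at h1 h2
      rw [h1] at h2
      exact (Prod.ext_iff.1 (Prod.ext_iff.1 h2).2).1
    calc ∑ q' : 𝒱 × Vhat, ((ν.map g) {q'}).toReal * d q'.1 q'.2
        = ∑ q' : 𝒱 × Vhat, (∑ w, (ν {(q'.1, w, q'.2)}).toReal) * d q'.1 q'.2 :=
          Finset.sum_congr rfl fun q' _ => by rw [hsing q']
      _ = ∑ q : 𝒱 × 𝒲 × Vhat, (ν {q}).toReal * d q.1 q.2.2 :=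
          fub1 (fun q => (ν {q}).toReal) d
  · have c1 : mutInf ν (fun q : 𝒱 × 𝒲 × Vhat => q.1) (fun q => (q.2.2, q.2.1))
        = mutInf ν (fun q => q.1) (fun q => q.2.1)
          + condMutInf ν (fun q => q.1) (fun q => q.2.2) (fun q => q.2.1) :=
      mutInf_chain ν _ _ _
    have c2 : mutInf ν (fun q : 𝒱 × 𝒲 × Vhat => q.1) (fun q => (q.2.1, q.2.2))
        = mutInf ν (fun q => q.1) (fun q => q.2.2)
          + condMutInf ν (fun q => q.1) (fun q => q.2.1) (fun q => q.2.2) :=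
      mutInf_chain ν _ _ _
    have c3 : mutInf ν (fun q : 𝒱 × 𝒲 × Vhat => q.1) (fun q => (q.2.2, q.2.1))
        = mutInf ν (fun q : 𝒱 × 𝒲 × Vhat => q.1) (fun q => (q.2.1, q.2.2)) :=
      mutInf_pair_comm ν _ _ _
    have c4 : 0 ≤ condMutInf ν (fun q : 𝒱 × 𝒲 × Vhat => q.1) (fun q => q.2.1) (fun q => q.2.2) :=
      condMutInf_nonneg ν _ _ _
    have c5 : mutInf ν (fun q : 𝒱 × 𝒲 × Vhat => q.1) (fun q => q.2.1)
        = mutInf P Prod.fst Prod.snd := by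
      rw [← hm]
      exact (mutInf_map ν (fun q : 𝒱 × 𝒲 × Vhat => (q.1, q.2.1))
        Measurable.of_discrete Prod.fst Prod.snd).symm
    have c6 : mutInf (ν.map g) Prod.fst Prod.snd
        = mutInf ν (fun q : 𝒱 × 𝒲 × Vhat => q.1) (fun q => q.2.2) :=
      mutInf_map ν g Measurable.of_discrete Prod.fst Prod.snd
    linarith

lemma lemmaB (P : Measure (𝒱 × 𝒲)) [IsProbabilityMeasure P]
    (ν' : Measure (𝒱 × Vhat)) [IsProbabilityMeasure ν']
    (hm : ν'.map Prod.fst = P.map Prod.fst) :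
    ∃ ν : Measure (𝒱 × 𝒲 × Vhat), IsProbabilityMeasure ν ∧
      ν.map (fun q => (q.1, q.2.1)) = P ∧
      (∀ dd : 𝒱 → Vhat → ℝ,
        (∑ q : 𝒱 × 𝒲 × Vhat, (ν {q}).toReal * dd q.1 q.2.2)
          = ∑ q' : 𝒱 × Vhat, (ν' {q'}).toReal * dd q'.1 q'.2) ∧
      condMutInf ν (fun q => q.1) (fun q => q.2.2) (fun q => q.2.1)
        ≤ mutInf ν' Prod.fst Prod.snd := by
  classical
  have ha_eqP : ∀ v : 𝒱, (P (Prod.fst ⁻¹' {v} : Set (𝒱 × 𝒲))).toReal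
      = ∑ w, (P {(v, w)}).toReal := by
    intro v
    have hset : (Prod.fst ⁻¹' {v} : Set (𝒱 × 𝒲)) = ⋃ w, {(v, w)} := by
      ext q; obtain ⟨qv, qw⟩ := q
      simp [Prod.ext_iff, eq_comm]
    rw [hset, meas_union_fibers]
    intro w1 w2 hne
    refine Set.disjoint_left.2 fun q h1 h2 => hne ?_
    simp only [Set.mem_singleton_iff] at h1 h2
    rw [h1] at h2
    exact (Prod.ext_iff.1 h2).2
  have ha_eqN : ∀ v : 𝒱, (P (Prod.fst ⁻¹' {v} : Set (𝒱 × 𝒲))).toReal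
      = ∑ vh, (ν' {(v, vh)}).toReal := by
    intro v
    have hmv : P (Prod.fst ⁻¹' {v} : Set (𝒱 × 𝒲)) = ν' (Prod.fst ⁻¹' {v} : Set (𝒱 × Vhat)) := by
      have h1 := congrArg (fun m : Measure 𝒱 => m {v}) hm
      rw [Measure.map_apply measurable_fst (measurableSet_singleton _),
        Measure.map_apply measurable_fst (measurableSet_singleton _)] at h1
      exact h1.symm
    have hset : (Prod.fst ⁻¹' {v} : Set (𝒱 × Vhat)) = ⋃ vh, {(v, vh)} := by
      ext q; obtain ⟨qv, qvh⟩ := q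
      simp [Prod.ext_iff, eq_comm]
    rw [hmv, hset, meas_union_fibers]
    intro w1 w2 hne
    refine Set.disjoint_left.2 fun q h1 h2 => hne ?_
    simp only [Set.mem_singleton_iff] at h1 h2
    rw [h1] at h2
    exact (Prod.ext_iff.1 h2).2
  have hPrz : ∀ v w, (P (Prod.fst ⁻¹' {v} : Set (𝒱 × 𝒲))).toReal = 0
      → (P {(v, w)}).toReal = 0 := by
    intro v w hav
    have := (Finset.sum_eq_zero_iff_of_nonneg
      (fun w _ => (ENNReal.toReal_nonneg : (0:ℝ) ≤ (P {(v, w)}).toReal))).1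
      ((ha_eqP v).symm.trans hav)
    exact this w (Finset.mem_univ w)
  have hNrz : ∀ v vh, (P (Prod.fst ⁻¹' {v} : Set (𝒱 × 𝒲))).toReal = 0
      → (ν' {(v, vh)}).toReal = 0 := by
    intro v vh hav
    have := (Finset.sum_eq_zero_iff_of_nonneg
      (fun vh _ => (ENNReal.toReal_nonneg : (0:ℝ) ≤ (ν' {(v, vh)}).toReal))).1
      ((ha_eqN v).symm.trans hav)
    exact this vh (Finset.mem_univ vh)
  have hsum_a : ∑ v, (P (Prod.fst ⁻¹' {v} : Set (𝒱 × 𝒲))).toReal = 1 := by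
    have hset : (⋃ v, Prod.fst ⁻¹' {v} : Set (𝒱 × 𝒲)) = Set.univ := by
      ext q; simp
    have hdisj : Pairwise (Function.onFun Disjoint fun v : 𝒱 => (Prod.fst ⁻¹' {v} : Set (𝒱 × 𝒲))) := by
      intro v1 v2 hne
      refine Set.disjoint_left.2 fun q h1 h2 => hne ?_
      simp only [Set.mem_preimage, Set.mem_singleton_iff] at h1 h2
      exact h1.symm.trans h2
    have := meas_union_fibers P (fun v : 𝒱 => (Prod.fst ⁻¹' {v} : Set (𝒱 × 𝒲))) hdisj
    rw [hset] at this
    simp only [measure_univ, ENNReal.toReal_one] at this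
    exact this.symm
  set g : 𝒱 × 𝒲 × Vhat → ℝ := fun q =>
    if (P (Prod.fst ⁻¹' {q.1} : Set (𝒱 × 𝒲))).toReal = 0 then 0
    else (P {(q.1, q.2.1)}).toReal * (ν' {(q.1, q.2.2)}).toReal
      / (P (Prod.fst ⁻¹' {q.1} : Set (𝒱 × 𝒲))).toReal with hg
  have hg0 : ∀ q, 0 ≤ g q := by
    intro q
    simp only [hg]
    split
    · exact le_refl 0
    · positivity
  have hgw : ∀ v vh, ∑ w, g (v, w, vh) = (ν' {(v, vh)}).toReal := by
    intro v vh
    by_cases hav : (P (Prod.fst ⁻¹' {v} : Set (𝒱 × 𝒲))).toReal = 0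
    · simp only [hg, hav, if_true, Finset.sum_const_zero]
      exact (hNrz v vh hav).symm
    · simp only [hg, hav, if_false]
      rw [← Finset.sum_div, ← Finset.sum_mul, ← ha_eqP v, mul_comm, mul_div_assoc,
        div_self hav, mul_one]
  have hgvh : ∀ v w, ∑ vh, g (v, w, vh) = (P {(v, w)}).toReal := by
    intro v w
    by_cases hav : (P (Prod.fst ⁻¹' {v} : Set (𝒱 × 𝒲))).toReal = 0
    · simp only [hg, hav, if_true, Finset.sum_const_zero]
      exact (hPrz v w hav).symm
    · simp only [hg, hav, if_false]
      simp_rw [mul_div_assoc]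
      rw [← Finset.mul_sum, ← Finset.sum_div, ← ha_eqN v, div_self hav, mul_one]
  have hgsum : ∑ q, g q = 1 := by
    simp only [Fintype.sum_prod_type]
    simp_rw [hgvh]
    calc ∑ v, ∑ w, (P {(v, w)}).toReal
        = ∑ v, (P (Prod.fst ⁻¹' {v} : Set (𝒱 × 𝒲))).toReal :=
          Finset.sum_congr rfl fun v _ => (ha_eqP v).symm
      _ = 1 := hsum_a
  set ν : Measure (𝒱 × 𝒲 × Vhat) :=
    ∑ q : 𝒱 × 𝒲 × Vhat, ENNReal.ofReal (g q) • Measure.dirac q with hν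
  have hνs : ∀ q, ν {q} = ENNReal.ofReal (g q) := fun q => sum_dirac_apply_singleton _ q
  have hνsr : ∀ q, (ν {q}).toReal = g q := fun q => by
    rw [hνs q]; exact ENNReal.toReal_ofReal (hg0 q)
  have hprob : IsProbabilityMeasure ν := by
    constructor
    rw [hν, sum_dirac_apply_univ, ← ENNReal.ofReal_sum_of_nonneg (fun q _ => hg0 q), hgsum,
      ENNReal.ofReal_one]
  haveI := hprob
  have hmargP : ν.map (fun q => (q.1, q.2.1)) = P := by
    refine Measure.ext_of_singleton fun vw => ?_
    obtain ⟨v, w⟩ := vw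
    rw [Measure.map_apply Measurable.of_discrete (measurableSet_singleton _)]
    have hset : ((fun q : 𝒱 × 𝒲 × Vhat => (q.1, q.2.1)) ⁻¹' {(v, w)})
        = ⋃ vh, {(v, w, vh)} := by
      ext q; obtain ⟨qv, qw, qvh⟩ := q
      simp only [Set.mem_preimage, Set.mem_singleton_iff, Set.mem_iUnion, Prod.ext_iff]
      constructor
      · rintro ⟨h1, h2⟩; exact ⟨qvh, h1, h2, rfl⟩
      · rintro ⟨vh, h1, h2, h3⟩; exact ⟨h1, h2⟩
    have hdisj : Pairwise (Function.onFun Disjoint fun vh : Vhat => ({(v, w, vh)} : Set (𝒱 × 𝒲 × Vhat))) := by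
      intro v1 v2 hne
      refine Set.disjoint_left.2 fun q h1 h2 => hne ?_
      simp only [Set.mem_singleton_iff] at h1 h2
      rw [h1] at h2
      exact (Prod.ext_iff.1 (Prod.ext_iff.1 h2).2).2
    rw [hset, measure_iUnion hdisj (fun _ => MeasurableSet.of_discrete), tsum_fintype]
    simp_rw [hνs]
    rw [← ENNReal.ofReal_sum_of_nonneg (fun vh _ => hg0 _), hgvh v w]
    exact ENNReal.ofReal_toReal (measure_ne_top P _)
  have hmapg' : ν.map (fun q => (q.1, q.2.2)) = ν' := by
    refine Measure.ext_of_singleton fun vw => ?_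
    obtain ⟨v, vh⟩ := vw
    rw [Measure.map_apply Measurable.of_discrete (measurableSet_singleton _)]
    have hset : ((fun q : 𝒱 × 𝒲 × Vhat => (q.1, q.2.2)) ⁻¹' {(v, vh)})
        = ⋃ w, {(v, w, vh)} := by
      ext q; obtain ⟨qv, qw, qvh⟩ := q
      simp only [Set.mem_preimage, Set.mem_singleton_iff, Set.mem_iUnion, Prod.ext_iff]
      constructor
      · rintro ⟨h1, h2⟩; exact ⟨qw, h1, rfl, h2⟩
      · rintro ⟨w, h1, h2, h3⟩; exact ⟨h1, h3⟩
    have hdisj : Pairwise (Function.onFun Disjoint fun w : 𝒲 => ({(v, w, vh)} : Set (𝒱 × 𝒲 × Vhat))) := by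
      intro v1 v2 hne
      refine Set.disjoint_left.2 fun q h1 h2 => hne ?_
      simp only [Set.mem_singleton_iff] at h1 h2
      rw [h1] at h2
      exact (Prod.ext_iff.1 (Prod.ext_iff.1 h2).2).1
    rw [hset, measure_iUnion hdisj (fun _ => MeasurableSet.of_discrete), tsum_fintype]
    simp_rw [hνs]
    rw [← ENNReal.ofReal_sum_of_nonneg (fun w _ => hg0 _), hgw v vh]
    exact ENNReal.ofReal_toReal (measure_ne_top ν' _)
  refine ⟨ν, hprob, hmargP, ?_, ?_⟩
  · intro dd
    calc ∑ q : 𝒱 × 𝒲 × Vhat, (ν {q}).toReal * dd q.1 q.2.2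
        = ∑ q : 𝒱 × 𝒲 × Vhat, g q * dd q.1 q.2.2 :=
          Finset.sum_congr rfl fun q _ => by rw [hνsr q]
      _ = ∑ q' : 𝒱 × Vhat, (∑ w, g (q'.1, w, q'.2)) * dd q'.1 q'.2 := (fub1 g dd).symm
      _ = ∑ q' : 𝒱 × Vhat, (ν' {q'}).toReal * dd q'.1 q'.2 := by
          refine Finset.sum_congr rfl fun q' _ => ?_
          obtain ⟨v, vh⟩ := q'
          rw [hgw v vh]
  · have hfib : ∀ (s : Vhat) (t : 𝒲) (u : 𝒱),
        ((fun q : 𝒱 × 𝒲 × Vhat => (q.2.2, q.2.1, q.1)) ⁻¹' {(s, t, u)})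
          = ({(u, t, s)} : Set (𝒱 × 𝒲 × Vhat)) := by
      intro s t u; ext q; obtain ⟨qv, qw, qvh⟩ := q
      simp only [Set.mem_preimage, Set.mem_singleton_iff, Prod.ext_iff]
      tauto
    have hp_eq : ∀ (s : Vhat) (t : 𝒲) (u : 𝒱),
        (ν ((fun q : 𝒱 × 𝒲 × Vhat => (q.2.2, q.2.1, q.1)) ⁻¹' {(s, t, u)})).toReal
          = g (u, t, s) := fun s t u => by rw [hfib s t u]; exact hνsr _
    have hzero : condMutInf ν (fun q : 𝒱 × 𝒲 × Vhat => q.2.2) (fun q => q.2.1)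
        (fun q => q.1) = 0 := by
      refine condMutInf_eq_zero ν _ _ _ ?_
      rintro ⟨s, t, u⟩
      dsimp only
      simp only [hp_eq]
      have hmid : ∑ st : Vhat × 𝒲, g (u, st.2, st.1)
          = (P (Prod.fst ⁻¹' {u} : Set (𝒱 × 𝒲))).toReal := by
        rw [Fintype.sum_prod_type]
        simp_rw [hgw]
        exact (ha_eqN u).symm
      rw [hmid, hgw u s, hgvh u t]
      by_cases hav : (P (Prod.fst ⁻¹' {u} : Set (𝒱 × 𝒲))).toReal = 0
      · rw [hav, hNrz u s hav]; ring
      · simp only [hg]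
        rw [if_neg hav, div_mul_cancel₀ _ hav]
        ring
    have d1 : mutInf ν (fun q : 𝒱 × 𝒲 × Vhat => q.2.2) (fun q => (q.1, q.2.1))
        = mutInf ν (fun q => q.2.2) (fun q => q.2.1)
          + condMutInf ν (fun q => q.2.2) (fun q => q.1) (fun q => q.2.1) :=
      mutInf_chain ν _ _ _
    have d2 : mutInf ν (fun q : 𝒱 × 𝒲 × Vhat => q.2.2) (fun q => (q.2.1, q.1))
        = mutInf ν (fun q => q.2.2) (fun q => q.1)
          + condMutInf ν (fun q => q.2.2) (fun q => q.2.1) (fun q => q.1) :=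
      mutInf_chain ν _ _ _
    have d3 : mutInf ν (fun q : 𝒱 × 𝒲 × Vhat => q.2.2) (fun q => (q.1, q.2.1))
        = mutInf ν (fun q : 𝒱 × 𝒲 × Vhat => q.2.2) (fun q => (q.2.1, q.1)) :=
      mutInf_pair_comm ν _ _ _
    have d5 : 0 ≤ mutInf ν (fun q : 𝒱 × 𝒲 × Vhat => q.2.2) (fun q => q.2.1) :=
      mutInf_nonneg ν _ _
    have d6 : condMutInf ν (fun q : 𝒱 × 𝒲 × Vhat => q.1) (fun q => q.2.2) (fun q => q.2.1)
        = condMutInf ν (fun q : 𝒱 × 𝒲 × Vhat => q.2.2) (fun q => q.1) (fun q => q.2.1) :=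
      condMutInf_comm ν _ _ _
    have d7 : mutInf ν' Prod.fst Prod.snd
        = mutInf ν (fun q : 𝒱 × 𝒲 × Vhat => q.1) (fun q => q.2.2) := by
      rw [← hmapg']
      exact mutInf_map ν (fun q : 𝒱 × 𝒲 × Vhat => (q.1, q.2.2))
        Measurable.of_discrete Prod.fst Prod.snd
    have d8 : mutInf ν (fun q : 𝒱 × 𝒲 × Vhat => q.1) (fun q => q.2.2)
        = mutInf ν (fun q : 𝒱 × 𝒲 × Vhat => q.2.2) (fun q => q.1) :=
      mutInf_comm ν _ _
    linarith
end Main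

/-- Gray's conditional rate-distortion lemma:
`R_{V|W}(D) ≤ R_V(D) ≤ R_{V|W}(D) + I(V;W)`, where the rate-distortion functions are
infima of (conditional) mutual informations over joint laws extending the given joint law
of `(V, W)` and meeting the expected-distortion constraint `D`. -/
theorem gray_conditional_rate_distortion
    {𝒱 𝒲 Vhat : Type*}
    [Fintype 𝒱] [Fintype 𝒲] [Fintype Vhat]
    [MeasurableSpace 𝒱] [DiscreteMeasurableSpace 𝒱]
    [MeasurableSpace 𝒲] [DiscreteMeasurableSpace 𝒲]
    [MeasurableSpace Vhat] [DiscreteMeasurableSpace Vhat]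
    (P : Measure (𝒱 × 𝒲)) [IsProbabilityMeasure P]
    (d : 𝒱 → Vhat → ℝ) (hd : ∀ v vh, 0 ≤ d v vh)
    (D : ℝ) (hD : 0 ≤ D)
    (RV RVW : ℝ)
    (hRV : RV = sInf {r : ℝ | ∃ ν : Measure (𝒱 × Vhat), IsProbabilityMeasure ν ∧
      ν.map Prod.fst = P.map Prod.fst ∧
      (∑ q : 𝒱 × Vhat, (ν {q}).toReal * d q.1 q.2) ≤ D ∧
      r = mutInf ν Prod.fst Prod.snd})
    (hRVW : RVW = sInf {r : ℝ | ∃ ν : Measure (𝒱 × 𝒲 × Vhat), IsProbabilityMeasure ν ∧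
      ν.map (fun q => (q.1, q.2.1)) = P ∧
      (∑ q : 𝒱 × 𝒲 × Vhat, (ν {q}).toReal * d q.1 q.2.2) ≤ D ∧
      r = condMutInf ν (fun q => q.1) (fun q => q.2.2) (fun q => q.2.1)})
    (hfeas : ∃ ν : Measure (𝒱 × 𝒲 × Vhat), IsProbabilityMeasure ν ∧
      ν.map (fun q => (q.1, q.2.1)) = P ∧
      (∑ q : 𝒱 × 𝒲 × Vhat, (ν {q}).toReal * d q.1 q.2.2) ≤ D) :
    RVW ≤ RV ∧ RV ≤ RVW + mutInf P Prod.fst Prod.snd := by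
  obtain ⟨ν₀, hν₀p, hν₀m, hν₀d⟩ := hfeas
  haveI := hν₀p
  have hAbdd : BddBelow {r : ℝ | ∃ ν : Measure (𝒱 × Vhat), IsProbabilityMeasure ν ∧
      ν.map Prod.fst = P.map Prod.fst ∧
      (∑ q : 𝒱 × Vhat, (ν {q}).toReal * d q.1 q.2) ≤ D ∧
      r = mutInf ν Prod.fst Prod.snd} := by
    refine ⟨0, ?_⟩
    rintro r ⟨ν, hp, hmm, hdd, rfl⟩
    haveI := hp
    exact mutInf_nonneg ν Prod.fst Prod.snd
  have hBbdd : BddBelow {r : ℝ | ∃ ν : Measure (𝒱 × 𝒲 × Vhat), IsProbabilityMeasure ν ∧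
      ν.map (fun q => (q.1, q.2.1)) = P ∧
      (∑ q : 𝒱 × 𝒲 × Vhat, (ν {q}).toReal * d q.1 q.2.2) ≤ D ∧
      r = condMutInf ν (fun q => q.1) (fun q => q.2.2) (fun q => q.2.1)} := by
    refine ⟨0, ?_⟩
    rintro r ⟨ν, hp, hmm, hdd, rfl⟩
    haveI := hp
    exact condMutInf_nonneg ν _ _ _
  have hBne : Set.Nonempty {r : ℝ | ∃ ν : Measure (𝒱 × 𝒲 × Vhat), IsProbabilityMeasure ν ∧
      ν.map (fun q => (q.1, q.2.1)) = P ∧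
      (∑ q : 𝒱 × 𝒲 × Vhat, (ν {q}).toReal * d q.1 q.2.2) ≤ D ∧
      r = condMutInf ν (fun q => q.1) (fun q => q.2.2) (fun q => q.2.1)} :=
    ⟨_, ⟨ν₀, hν₀p, hν₀m, hν₀d, rfl⟩⟩
  obtain ⟨ν₀', hp', hm', hdeq', hle'⟩ := lemmaA P d ν₀ hν₀m
  have hAne : Set.Nonempty {r : ℝ | ∃ ν : Measure (𝒱 × Vhat), IsProbabilityMeasure ν ∧
      ν.map Prod.fst = P.map Prod.fst ∧
      (∑ q : 𝒱 × Vhat, (ν {q}).toReal * d q.1 q.2) ≤ D ∧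
      r = mutInf ν Prod.fst Prod.snd} :=
    ⟨_, ⟨ν₀', hp', hm', by rw [hdeq']; exact hν₀d, rfl⟩⟩
  constructor
  · rw [hRVW, hRV]
    refine le_csInf hAne ?_
    rintro r ⟨ν', hp1, hm1, hd1, rfl⟩
    haveI := hp1
    obtain ⟨ν, hp2, hm2, hdeq, hle⟩ := lemmaB P ν' hm1
    refine (csInf_le hBbdd ?_).trans hle
    exact ⟨ν, hp2, hm2, by rw [hdeq d]; exact hd1, rfl⟩
  · rw [hRV, hRVW, ← sub_le_iff_le_add]
    refine le_csInf hBne ?_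
    rintro r ⟨ν, hp1, hm1, hd1, rfl⟩
    rw [sub_le_iff_le_add]
    haveI := hp1
    obtain ⟨ν', hp2, hm2, hdeq, hle⟩ := lemmaA P d ν hm1
    refine (csInf_le hAbdd ?_).trans hle
    exact ⟨ν', hp2, hm2, by rw [hdeq]; exact hd1, rfl⟩
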